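/- Truncated multivariate Hermite sum bound: Let n and d be positive integers, let y ∈ ℝⁿ, and let u ∈ (0, 1). Then Σ_{a} (∏_{i=1}^{n} He_{a_i}(y_i))² / (∏_{i=1}^{n} a_i!) ≤ u^{−d} · (1 − u²)^{−n/2} · exp( (u/(1+u)) · ‖y‖₂² ), where the sum ranges over all multi-indices a = (a₁, …, a_n) of nonnegative integers with a₁ + ⋯ + a_n ≤ d. -/

import Mathlib

open Finset

namespace HermiteAux

open MeasureTheory Real Polynomial

noncomputable def g (b c d : ℝ) : ℝ → ℝ := fun w => Real.exp (-b*w^2 + c*w + d)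

lemma g_pos (b c d w : ℝ) : 0 < g b c d w := Real.exp_pos _

lemma g_eq (b c d : ℝ) (hb : b ≠ 0) (w : ℝ) :
    g b c d w = Real.exp (-b*(w - c/(2*b))^2) * Real.exp (d + c^2/(4*b)) := by
  rw [g, ← Real.exp_add]
  congr 1
  field_simp
  ring

lemma integrable_g {b : ℝ} (hb : 0 < b) (c d : ℝ) : Integrable (g b c d) := by
  have : Integrable (fun w : ℝ => Real.exp (-b*(w - c/(2*b))^2) * Real.exp (d + c^2/(4*b))) := by
    exact ((integrable_exp_neg_mul_sq hb).comp_sub_right (c/(2*b))).mul_const _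
  exact this.congr (by
    filter_upwards with w
    exact (g_eq b c d hb.ne' w).symm)

lemma integral_g {b : ℝ} (hb : 0 < b) (c d : ℝ) :
    ∫ w, g b c d w = Real.sqrt (π/b) * Real.exp (d + c^2/(4*b)) := by
  have h1 : ∫ w, g b c d w
      = ∫ w, Real.exp (-b*(w - c/(2*b))^2) * Real.exp (d + c^2/(4*b)) := by
    congr 1; funext w; exact g_eq b c d hb.ne' w
  rw [h1, integral_mul_const, integral_sub_right_eq_self (fun w : ℝ => Real.exp (-b*w^2)),
    integral_gaussian]

lemma integrable_pow_g {b : ℝ} (hb : 0 < b) (c d : ℝ) (i : ℕ) :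
    Integrable (fun w : ℝ => w^i * g b c d w) := by
  have hgc : Continuous (g b c d) := by
    unfold g; fun_prop
  have hmeas : AEStronglyMeasurable (fun w : ℝ => w^i * g b c d w) volume :=
    ((continuous_pow i).mul hgc).aestronglyMeasurable
  have hint : Integrable (fun w : ℝ => (i.factorial : ℝ) *
      (g b (c+1) d w + g b (c-1) d w)) :=
    (((integrable_g hb (c+1) d).add (integrable_g hb (c-1) d)).const_mul _)
  refine hint.mono' hmeas ?_
  filter_upwards with w
  have h1 : |w|^i ≤ (i.factorial : ℝ) * Real.exp |w| := by
    have h2 : |w|^i / (i.factorial : ℝ) ≤ Real.exp |w| := by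
      calc |w|^i / (i.factorial : ℝ)
          ≤ ∑ j ∈ Finset.range (i+1), |w|^j / (j.factorial : ℝ) :=
            Finset.single_le_sum (f := fun j => |w|^j / (j.factorial : ℝ))
              (fun j _ => by positivity) (Finset.self_mem_range_succ i)
        _ ≤ Real.exp |w| := Real.sum_le_exp_of_nonneg (abs_nonneg w) (i+1)
    calc |w|^i = |w|^i / (i.factorial : ℝ) * (i.factorial : ℝ) := by
          field_simp
      _ ≤ Real.exp |w| * (i.factorial : ℝ) := by
          apply mul_le_mul_of_nonneg_right h2 (by positivity)
      _ = (i.factorial : ℝ) * Real.exp |w| := by ring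
  have h3 : Real.exp |w| ≤ Real.exp w + Real.exp (-w) := by
    rcases abs_cases w with ⟨h, _⟩ | ⟨h, _⟩
    · rw [h]; nlinarith [Real.exp_pos (-w)]
    · rw [h]; nlinarith [Real.exp_pos w]
  have h4 : Real.exp w * g b c d w = g b (c+1) d w := by
    rw [g, g, ← Real.exp_add]; congr 1; ring
  have h5 : Real.exp (-w) * g b c d w = g b (c-1) d w := by
    rw [g, g, ← Real.exp_add]; congr 1; ring
  have hg0 : 0 ≤ g b c d w := (g_pos b c d w).le
  calc ‖w^i * g b c d w‖ = |w|^i * g b c d w := by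
        rw [norm_mul, norm_pow, Real.norm_eq_abs, Real.norm_eq_abs, abs_of_nonneg hg0]
    _ ≤ ((i.factorial : ℝ) * Real.exp |w|) * g b c d w :=
        mul_le_mul_of_nonneg_right h1 hg0
    _ ≤ ((i.factorial : ℝ) * (Real.exp w + Real.exp (-w))) * g b c d w := by
        apply mul_le_mul_of_nonneg_right _ hg0
        exact mul_le_mul_of_nonneg_left h3 (by positivity)
    _ = (i.factorial : ℝ) * (g b (c+1) d w + g b (c-1) d w) := by
        rw [← h4, ← h5]; ring

lemma integrable_poly_g {b : ℝ} (hb : 0 < b) (c d : ℝ) (p : ℝ[X]) :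
    Integrable (fun w : ℝ => p.eval w * g b c d w) := by
  have : (fun w : ℝ => p.eval w * g b c d w)
      = fun w => ∑ i ∈ range (p.natDegree + 1), p.coeff i * (w^i * g b c d w) := by
    funext w
    rw [Polynomial.eval_eq_sum_range, Finset.sum_mul]
    exact Finset.sum_congr rfl (fun i _ => by ring)
  rw [this]
  exact integrable_finset_sum _ (fun i _ => (integrable_pow_g hb c d i).const_mul _)

lemma hasDerivAt_g (b c d w : ℝ) :
    HasDerivAt (g b c d) ((-2*b*w + c) * g b c d w) w := by
  have h1 : HasDerivAt (fun w : ℝ => -b*w^2 + c*w + d) (-2*b*w + c) w := by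
    have := (((hasDerivAt_pow 2 w).const_mul (-b)).add ((hasDerivAt_id w).const_mul c)).add_const d
    refine this.congr_deriv ?_
    ring
  have := h1.exp
  refine this.congr_deriv ?_
  simp only [g]
  ring

lemma stein {b : ℝ} (hb : 0 < b) (c d : ℝ) (p : ℝ[X]) :
    ∫ w, (derivative p).eval w * g b c d w
      = 2*b*(∫ w, (X*p : ℝ[X]).eval w * g b c d w) - c * (∫ w, p.eval w * g b c d w) := by
  set q : ℝ[X] := Polynomial.C (-(2*b)) * (X*p) + Polynomial.C c * p with hq
  have hderiv : ∀ w, HasDerivAt (fun w => p.eval w * g b c d w)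
      ((derivative p + q).eval w * g b c d w) w := by
    intro w
    have := (Polynomial.hasDerivAt p w).mul (hasDerivAt_g b c d w)
    refine this.congr_deriv ?_
    simp only [hq, Polynomial.eval_add, Polynomial.eval_mul, Polynomial.eval_C,
      Polynomial.eval_X]
    ring
  have hzero : ∫ w, (derivative p + q).eval w * g b c d w = 0 :=
    integral_eq_zero_of_hasDerivAt_of_integrable hderiv
      (integrable_poly_g hb c d _) (integrable_poly_g hb c d p)
  have h2 : ∫ w, (derivative p + q).eval w * g b c d w
      = (∫ w, (derivative p).eval w * g b c d w) + ∫ w, q.eval w * g b c d w := by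
    simp_rw [Polynomial.eval_add, add_mul]
    exact integral_add (integrable_poly_g hb c d _) (integrable_poly_g hb c d _)
  have h3 : ∫ w, q.eval w * g b c d w
      = -(2*b) * (∫ w, (X*p : ℝ[X]).eval w * g b c d w)
        + c * (∫ w, p.eval w * g b c d w) := by
    have hpt : ∀ w, q.eval w * g b c d w
        = -(2*b) * ((X*p : ℝ[X]).eval w * g b c d w) + c * (p.eval w * g b c d w) := by
      intro w
      simp only [hq, Polynomial.eval_add, Polynomial.eval_mul, Polynomial.eval_C,
        Polynomial.eval_X]
      ring
    simp_rw [hpt]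
    rw [integral_add ((integrable_poly_g hb c d _).const_mul _)
      ((integrable_poly_g hb c d p).const_mul _), integral_const_mul, integral_const_mul]
  rw [h2, h3] at hzero
  linarith

noncomputable def P (k : ℕ) : ℝ[X] := (Polynomial.hermite k).map (Int.castRingHom ℝ)

lemma P_zero : P 0 = 1 := by simp [P, Polynomial.hermite_zero]

lemma P_one : P 1 = X := by simp [P, Polynomial.hermite_one]

lemma P_succ (k : ℕ) : P (k+1) = X * P k - derivative (P k) := by
  rw [P, Polynomial.hermite_succ, Polynomial.map_sub, Polynomial.map_mul, Polynomial.map_X,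
    ← Polynomial.derivative_map]
  rfl

lemma derivative_P : ∀ k : ℕ, derivative (P k) = Polynomial.C (k : ℝ) * P (k-1) ∧
    derivative (P (k+1)) = Polynomial.C ((k : ℝ)+1) * P k := by
  intro k
  induction k with
  | zero =>
    constructor
    · simp [P_zero]
    · simp [P_one, P_zero]
  | succ k ih =>
    obtain ⟨ih1, ih2⟩ := ih
    refine ⟨by simpa using ih2, ?_⟩
    have hrec : P (k+1) = X * P k - Polynomial.C (k : ℝ) * P (k-1) := by
      rw [P_succ, ih1]
    rw [P_succ (k+1), Polynomial.derivative_sub, Polynomial.derivative_mul,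
      Polynomial.derivative_X, ih2, Polynomial.derivative_mul]
    simp only [Polynomial.derivative_C, zero_mul, zero_add, one_mul]
    rw [ih1]
    have : X * (Polynomial.C ((k : ℝ)+1) * P k) - Polynomial.C ((k : ℝ)+1) *
        (Polynomial.C (k : ℝ) * P (k-1))
        = Polynomial.C ((k : ℝ)+1) * P (k+1) := by
      rw [hrec]; ring
    have h2 : Polynomial.C ((k : ℝ) + 1 + 1) * P (k+1)
        = P (k+1) + Polynomial.C ((k : ℝ)+1) * P (k+1) := by
      rw [Polynomial.C_add, Polynomial.C_1]; ring
    push_cast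
    rw [h2, ← this]
    ring

lemma P_rec (k : ℕ) : P (k+1) = X * P k - Polynomial.C (k : ℝ) * P (k-1) := by
  rw [P_succ, (derivative_P k).1]

lemma aeval_hermite_eq (x : ℝ) (k : ℕ) :
    (Polynomial.aeval x (Polynomial.hermite k) : ℝ) = (P k).eval x := by
  rw [P, Polynomial.eval_map, Polynomial.aeval_def]
  norm_num

lemma stein_X {b : ℝ} (hb : 0 < b) (c d : ℝ) (p : ℝ[X]) :
    ∫ w, (X*p : ℝ[X]).eval w * g b c d w
      = (c * (∫ w, p.eval w * g b c d w)
        + ∫ w, (derivative p).eval w * g b c d w) / (2*b) := by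
  have key := stein hb c d p
  rw [eq_div_iff (by positivity : (2*b) ≠ 0)]
  linear_combination -key

lemma hermite_gauss_int (σ2 v x : ℝ) (hσ : 0 < σ2) (hv2 : v^2 = 1 - σ2) :
    ∀ k : ℕ, ∫ w, (P k).eval w * g (1/(2*σ2)) (v*x/σ2) (-(v^2*x^2)/(2*σ2)) w
      = v^k * (P k).eval x * Real.sqrt (2*π*σ2) := by
  set b₁ : ℝ := 1/(2*σ2) with hb₁def
  set c₁ : ℝ := v*x/σ2 with hc₁def
  set d₁ : ℝ := -(v^2*x^2)/(2*σ2) with hd₁def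
  have hσ' : σ2 ≠ 0 := hσ.ne'
  have hb₁ : 0 < b₁ := by rw [hb₁def]; positivity
  have e1 : c₁/(2*b₁) = v*x := by
    rw [hc₁def, hb₁def]
    field_simp
    try exact Or.inl (by ring)
  have e2 : 1/(2*b₁) = σ2 := by
    rw [hb₁def]
    field_simp
  have hS : Real.sqrt (π/b₁) = Real.sqrt (2*π*σ2) := by
    congr 1
    rw [hb₁def]
    field_simp
  have hQ0 : ∫ w, (P 0).eval w * g b₁ c₁ d₁ w = Real.sqrt (2*π*σ2) := by
    have hexp : d₁ + c₁^2/(4*b₁) = 0 := by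
      rw [hd₁def, hc₁def, hb₁def]
      field_simp
      ring
    rw [show (fun w => (P 0).eval w * g b₁ c₁ d₁ w) = g b₁ c₁ d₁ from by
      funext w; rw [P_zero]; simp]
    rw [integral_g hb₁, hS, hexp, Real.exp_zero, mul_one]
  have hXp : ∀ p : ℝ[X], ∫ w, (X*p : ℝ[X]).eval w * g b₁ c₁ d₁ w
      = v*x*(∫ w, p.eval w * g b₁ c₁ d₁ w)
        + σ2 * ∫ w, (derivative p).eval w * g b₁ c₁ d₁ w := by
    intro p
    have hgen : ∀ A B : ℝ, (c₁*A + B)/(2*b₁) = v*x*A + σ2*B := by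
      intro A B
      rw [← e1, ← e2]
      ring
    rw [stein_X hb₁ c₁ d₁ p, hgen]
  have main : ∀ k : ℕ,
      (∫ w, (P k).eval w * g b₁ c₁ d₁ w = v^k * (P k).eval x * Real.sqrt (2*π*σ2)) ∧
      (∫ w, (P (k+1)).eval w * g b₁ c₁ d₁ w
        = v^(k+1) * (P (k+1)).eval x * Real.sqrt (2*π*σ2)) := by
    intro k
    induction k with
    | zero =>
      constructor
      · rw [hQ0, P_zero]
        simp
      · have h1 : (P 1 : ℝ[X]) = X * P 0 := by rw [P_zero, P_one, mul_one]
        rw [h1, hXp (P 0)]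
        rw [show derivative (P 0) = 0 from by rw [P_zero]; simp]
        simp only [Polynomial.eval_zero, zero_mul, integral_zero, mul_zero, add_zero]
        rw [hQ0]
        rw [P_zero]
        simp only [Polynomial.eval_mul, Polynomial.eval_X, Polynomial.eval_one]
        ring
    | succ k ih =>
      obtain ⟨ih1, ih2⟩ := ih
      refine ⟨ih2, ?_⟩
      have hrec : P (k+2) = X * P (k+1) - Polynomial.C ((k:ℝ)+1) * P k := by
        have := P_rec (k+1)
        push_cast at this
        simpa using this
      have hsplit : ∫ w, (P (k+2)).eval w * g b₁ c₁ d₁ w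
          = (∫ w, (X * P (k+1) : ℝ[X]).eval w * g b₁ c₁ d₁ w)
            - ((k:ℝ)+1) * ∫ w, (P k).eval w * g b₁ c₁ d₁ w := by
        rw [← integral_const_mul, ← integral_sub (integrable_poly_g hb₁ c₁ d₁ _)
          ((integrable_poly_g hb₁ c₁ d₁ _).const_mul _)]
        congr 1
        funext w
        rw [hrec]
        simp only [Polynomial.eval_sub, Polynomial.eval_mul, Polynomial.eval_C,
          Polynomial.eval_X]
        ring
      have hder : derivative (P (k+1)) = Polynomial.C ((k:ℝ)+1) * P k := by
        have := (derivative_P k).2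
        push_cast at this ⊢
        exact this
      have hdint : ∫ w, (derivative (P (k+1))).eval w * g b₁ c₁ d₁ w
          = ((k:ℝ)+1) * ∫ w, (P k).eval w * g b₁ c₁ d₁ w := by
        rw [hder, ← integral_const_mul]
        congr 1
        funext w
        simp only [Polynomial.eval_mul, Polynomial.eval_C]
        ring
      have hval : (P (k+2)).eval x = x * (P (k+1)).eval x - ((k:ℝ)+1) * (P k).eval x := by
        rw [hrec]
        simp [Polynomial.eval_sub, Polynomial.eval_mul]
      rw [hsplit, hXp (P (k+1)), hdint, ih1, ih2, hval]
      linear_combination (((k:ℝ)+1) * v^k * (P k).eval x * Real.sqrt (2*π*σ2)) * hv2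

  intro k
  exact (main k).1

noncomputable def M (j k : ℕ) : ℝ := ∫ w, ((P j) * (P k) : ℝ[X]).eval w * g (1/2) 0 0 w

lemma hb_half : (0:ℝ) < 1/2 := by norm_num

lemma herm_int_gamma (j : ℕ) :
    ∫ w, (P j).eval w * g (1/2) 0 0 w = (if j = 0 then Real.sqrt (2*π) else 0) := by
  have h := hermite_gauss_int 1 0 0 one_pos (by ring) j
  have harg : g (1/(2*1)) ((0:ℝ)*0/1) (-((0:ℝ)^2*0^2)/(2*1)) = g (1/2) 0 0 := by
    norm_num
  rw [harg] at h
  rw [h]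
  rcases Nat.eq_zero_or_pos j with hj | hj
  · subst hj
    rw [P_zero]
    simp
  · rw [if_neg hj.ne']
    rw [zero_pow hj.ne']
    ring

lemma M_rec (j k : ℕ) : M j (k+1) = j * M (j-1) k := by
  have hrec : (P j) * P (k+1) = X * ((P j) * P k) - Polynomial.C ((k:ℝ)) * ((P j) * P (k-1)) := by
    rw [P_rec k]
    ring
  have hsplit : M j (k+1)
      = (∫ w, (X * ((P j) * P k) : ℝ[X]).eval w * g (1/2) 0 0 w)
        - (k:ℝ) * ∫ w, ((P j) * P (k-1) : ℝ[X]).eval w * g (1/2) 0 0 w := by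
    rw [M, ← integral_const_mul, ← integral_sub (integrable_poly_g hb_half 0 0 _)
      ((integrable_poly_g hb_half 0 0 _).const_mul _)]
    congr 1
    funext w
    rw [hrec]
    simp only [Polynomial.eval_sub, Polynomial.eval_mul, Polynomial.eval_C, Polynomial.eval_X]
    ring
  have hX : ∫ w, (X * ((P j) * P k) : ℝ[X]).eval w * g (1/2) 0 0 w
      = (j:ℝ) * M (j-1) k + (k:ℝ) * ∫ w, ((P j) * P (k-1) : ℝ[X]).eval w * g (1/2) 0 0 w := by
    rw [stein_X hb_half 0 0]
    have hd : derivative ((P j) * P k)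
        = Polynomial.C ((j:ℝ)) * ((P (j-1)) * P k) + Polynomial.C ((k:ℝ)) * ((P j) * P (k-1)) := by
      rw [Polynomial.derivative_mul, (derivative_P j).1, (derivative_P k).1]
      ring
    rw [hd]
    have : ∫ w, (Polynomial.C ((j:ℝ)) * ((P (j-1)) * P k)
        + Polynomial.C ((k:ℝ)) * ((P j) * P (k-1)) : ℝ[X]).eval w * g (1/2) 0 0 w
        = (j:ℝ) * (∫ w, ((P (j-1)) * P k : ℝ[X]).eval w * g (1/2) 0 0 w)
          + (k:ℝ) * ∫ w, ((P j) * P (k-1) : ℝ[X]).eval w * g (1/2) 0 0 w := by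
      rw [← integral_const_mul, ← integral_const_mul, ← integral_add
        ((integrable_poly_g hb_half 0 0 _).const_mul _)
        ((integrable_poly_g hb_half 0 0 _).const_mul _)]
      congr 1
      funext w
      simp only [Polynomial.eval_add, Polynomial.eval_mul, Polynomial.eval_C]
      ring
    rw [this, M]
    ring
  rw [hsplit, hX]
  ring

lemma M_eq : ∀ k j : ℕ, M j k = if j = k then (k.factorial : ℝ) * Real.sqrt (2*π) else 0 := by
  intro k
  induction k with
  | zero =>
    intro j
    have : M j 0 = ∫ w, (P j).eval w * g (1/2) 0 0 w := by
      rw [M]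
      congr 1
      funext w
      rw [P_zero]
      simp
    rw [this, herm_int_gamma j]
    simp
  | succ k ih =>
    intro j
    rw [M_rec j k]
    cases j with
    | zero => simp
    | succ j' =>
      rw [Nat.succ_sub_one, ih j']
      rcases eq_or_ne j' k with h | h
      · subst h
        rw [if_pos rfl, if_pos rfl]
        rw [Nat.factorial_succ]
        push_cast
        ring
      · rw [if_neg h, if_neg (by omega), mul_zero]

lemma pointwise_expand (b₁ c₁ d₁ q w : ℝ) :
    (g b₁ c₁ d₁ w - q * g (1/2) 0 0 w)^2 * Real.exp (w^2/2)
      = g (2*b₁ - 1/2) (2*c₁) (2*d₁) w - 2*(q * g b₁ c₁ d₁ w) + q^2 * g (1/2) 0 0 w := by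
  simp only [g]
  have e1 : Real.exp (-(1/2)*w^2 + 0*w + 0) * Real.exp (w^2/2) = 1 := by
    rw [← Real.exp_add, show -(1/2)*w^2 + 0*w + 0 + w^2/2 = 0 by ring, Real.exp_zero]
  have e2 : Real.exp (-b₁*w^2 + c₁*w + d₁) * Real.exp (-b₁*w^2 + c₁*w + d₁) * Real.exp (w^2/2)
      = Real.exp (-(2*b₁ - 1/2)*w^2 + 2*c₁*w + 2*d₁) := by
    rw [← Real.exp_add, ← Real.exp_add]
    congr 1
    ring
  have e3 : Real.exp (-(1/2)*w^2 + 0*w + 0) * Real.exp (-(1/2)*w^2 + 0*w + 0)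
      * Real.exp (w^2/2) = Real.exp (-(1/2)*w^2 + 0*w + 0) := by
    rw [← Real.exp_add, ← Real.exp_add]
    congr 1
    ring
  linear_combination e2 - 2*q*Real.exp (-b₁*w^2 + c₁*w + d₁) * e1 + q^2 * e3

lemma exp_arith (u x v : ℝ) (hu0 : 0 < u) (hu1 : u < 1) (hv2 : v^2 = u) :
    2*(-(v^2*x^2)/(2*(1-u))) + (2*(v*x/(1-u)))^2/(4*(2*(1/(2*(1-u))) - 1/2)) = u*x^2/(1+u) := by
  have h1u : (1:ℝ)+u ≠ 0 := by linarith
  have h1mu : (1:ℝ)-u ≠ 0 := by linarith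
  have hc : (2*(v*x/(1-u)))^2 = 4*u*x^2/(1-u)^2 := by
    rw [← hv2]
    field_simp
    ring
  have hb : 2*(1/(2*(1-u))) - 1/2 = (1+u)/(2*(1-u)) := by
    field_simp
    ring
  rw [hv2, hc, hb]
  rw [show (4:ℝ)*((1+u)/(2*(1-u))) = (2*(1+u))/(1-u) from by field_simp; ring]
  rw [div_div_div_eq]
  field_simp
  ring

lemma sqrt_arith (u : ℝ) (hu0 : 0 < u) (hu1 : u < 1) :
    π/(2*(1/(2*(1-u))) - 1/2) * (1-u^2) = 2*π*(1-u)^2 := by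
  have h1u : (1:ℝ)+u ≠ 0 := by linarith
  have h1mu : (1:ℝ)-u ≠ 0 := by linarith
  have hb : 2*(1/(2*(1-u))) - 1/2 = (1+u)/(2*(1-u)) := by field_simp; ring
  rw [hb, div_div_eq_mul_div]
  field_simp
  ring

lemma oneD (u x : ℝ) (hu0 : 0 < u) (hu1 : u < 1) (N : ℕ) :
    ∑ k ∈ range (N+1), u^k * ((P k).eval x)^2 / (k.factorial : ℝ)
      ≤ Real.exp (u*x^2/(1+u)) / Real.sqrt (1-u^2) := by
  set v : ℝ := Real.sqrt u with hvdef
  have hv2 : v^2 = u := Real.sq_sqrt hu0.le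
  set σ2 : ℝ := 1 - u with hσ2def
  have hσ : 0 < σ2 := by rw [hσ2def]; linarith
  set s2 : ℝ := Real.sqrt σ2 with hs2def
  have hs2 : s2^2 = σ2 := Real.sq_sqrt hσ.le
  have hs2pos : 0 < s2 := Real.sqrt_pos.mpr hσ
  set b₁ : ℝ := 1/(2*σ2) with hb₁def
  set c₁ : ℝ := v*x/σ2 with hc₁def
  set d₁ : ℝ := -(v^2*x^2)/(2*σ2) with hd₁def
  have hb₁ : 0 < b₁ := by rw [hb₁def]; positivity
  have hb₂ : 0 < 2*b₁ - 1/2 := by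
    rw [hb₁def]
    rw [div_mul_eq_div_div_swap]
    have h1 : 1/σ2 > 1 := by
      rw [gt_iff_lt, lt_div_iff₀ hσ]
      rw [hσ2def]; linarith
    linarith
  have hNk := hermite_gauss_int σ2 v x hσ (by rw [hv2, hσ2def]; ring)
  -- coefficients
  set β : ℕ → ℝ := fun k => s2 * v^k * (P k).eval x / (k.factorial : ℝ) with hβdef
  set sN : ℝ[X] := ∑ k ∈ range (N+1), Polynomial.C (β k) * P k with hsNdef
  -- the decomposition
  have hnonneg : 0 ≤ ∫ w, (g b₁ c₁ d₁ w - sN.eval w * g (1/2) 0 0 w)^2 * Real.exp (w^2/2) :=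
    integral_nonneg (fun w => by positivity)
  have hexpand : ∫ w, (g b₁ c₁ d₁ w - sN.eval w * g (1/2) 0 0 w)^2 * Real.exp (w^2/2)
      = (∫ w, g (2*b₁ - 1/2) (2*c₁) (2*d₁) w)
        - 2 * (∫ w, sN.eval w * g b₁ c₁ d₁ w)
        + ∫ w, (sN * sN : ℝ[X]).eval w * g (1/2) 0 0 w := by
    have hfe : (fun w => (g b₁ c₁ d₁ w - sN.eval w * g (1/2) 0 0 w)^2 * Real.exp (w^2/2))
        = fun w => g (2*b₁ - 1/2) (2*c₁) (2*d₁) w - 2 * (sN.eval w * g b₁ c₁ d₁ w)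
          + (sN * sN : ℝ[X]).eval w * g (1/2) 0 0 w := by
      funext w
      rw [pointwise_expand]
      simp only [Polynomial.eval_mul]
      ring
    have hIa : Integrable (fun w => g (2*b₁ - 1/2) (2*c₁) (2*d₁) w) := integrable_g hb₂ _ _
    have hIb : Integrable (fun w => 2 * (sN.eval w * g b₁ c₁ d₁ w)) :=
      (integrable_poly_g hb₁ c₁ d₁ sN).const_mul 2
    have hI12 : Integrable (fun w => g (2*b₁ - 1/2) (2*c₁) (2*d₁) w
        - 2 * (sN.eval w * g b₁ c₁ d₁ w)) := hIa.sub hIb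
    have hI3 : Integrable (fun w => (sN * sN : ℝ[X]).eval w * g (1/2) 0 0 w) :=
      integrable_poly_g hb_half 0 0 _
    rw [hfe, integral_add hI12 hI3, integral_sub hIa hIb, integral_const_mul]
  -- value of A
  have hA : ∫ w, sN.eval w * g b₁ c₁ d₁ w
      = Real.sqrt (2*π) * σ2 * ∑ k ∈ range (N+1), u^k * ((P k).eval x)^2 / (k.factorial : ℝ) := by
    have h1 : ∀ w, sN.eval w * g b₁ c₁ d₁ w
        = ∑ k ∈ range (N+1), β k * ((P k).eval w * g b₁ c₁ d₁ w) := by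
      intro w
      rw [hsNdef, Polynomial.eval_finset_sum, Finset.sum_mul]
      refine Finset.sum_congr rfl (fun k _ => ?_)
      simp only [Polynomial.eval_mul, Polynomial.eval_C]
      ring
    simp_rw [h1]
    rw [integral_finset_sum _ (fun k _ => (integrable_poly_g hb₁ c₁ d₁ (P k)).const_mul _)]
    rw [Finset.mul_sum]
    refine Finset.sum_congr rfl (fun k _ => ?_)
    rw [integral_const_mul, hNk k]
    have hsq : Real.sqrt (2*π*σ2) = Real.sqrt (2*π) * s2 := by
      rw [hs2def, Real.sqrt_mul (by positivity)]
    have hfact : ((k.factorial : ℝ)) ≠ 0 := Nat.cast_ne_zero.mpr k.factorial_pos.ne'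
    have hvk : v^k * v^k = u^k := by
      rw [← hv2, ← pow_add, ← pow_mul]
      congr 1
      omega
    calc β k * (v^k * (P k).eval x * Real.sqrt (2*π*σ2))
        = s2*v^k*(P k).eval x/(k.factorial : ℝ)
          * (v^k*(P k).eval x*(Real.sqrt (2*π)*s2)) := by rw [hsq, hβdef]
      _ = Real.sqrt (2*π)*(s2^2)*((v^k*v^k)*((P k).eval x)^2/(k.factorial : ℝ)) := by
          field_simp
      _ = Real.sqrt (2*π)*σ2*(u^k*((P k).eval x)^2/(k.factorial : ℝ)) := by rw [hs2, hvk]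
  -- value of B
  have hB : ∫ w, (sN * sN : ℝ[X]).eval w * g (1/2) 0 0 w
      = Real.sqrt (2*π) * σ2 * ∑ k ∈ range (N+1), u^k * ((P k).eval x)^2 / (k.factorial : ℝ) := by
    have h1 : ∀ w, (sN * sN : ℝ[X]).eval w * g (1/2) 0 0 w
        = ∑ j ∈ range (N+1), ∑ k ∈ range (N+1),
            β j * β k * (((P j) * (P k) : ℝ[X]).eval w * g (1/2) 0 0 w) := by
      intro w
      rw [hsNdef, Finset.sum_mul_sum]
      rw [Polynomial.eval_finset_sum, Finset.sum_mul]
      refine Finset.sum_congr rfl fun j _ => ?_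
      rw [Polynomial.eval_finset_sum, Finset.sum_mul]
      refine Finset.sum_congr rfl fun k _ => ?_
      simp only [Polynomial.eval_mul, Polynomial.eval_C]
      ring
    simp_rw [h1]
    rw [integral_finset_sum _ (fun j _ => integrable_finset_sum _
      (fun k _ => (integrable_poly_g hb_half 0 0 _).const_mul _))]
    have h2 : ∀ j ∈ range (N+1),
        (∫ w, ∑ k ∈ range (N+1), β j * β k * (((P j) * (P k) : ℝ[X]).eval w * g (1/2) 0 0 w))
          = Real.sqrt (2*π) * σ2 * (u^j * ((P j).eval x)^2 / (j.factorial : ℝ)) := by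
      intro j hj
      rw [integral_finset_sum _ (fun k _ => (integrable_poly_g hb_half 0 0 _).const_mul _)]
      have h3 : ∀ k ∈ range (N+1),
          (∫ w, β j * β k * (((P j) * (P k) : ℝ[X]).eval w * g (1/2) 0 0 w))
            = β j * β k * M j k := by
        intro k _
        rw [integral_const_mul, M]
      rw [Finset.sum_congr rfl h3]
      rw [Finset.sum_eq_single j]
      · rw [M_eq j j, if_pos rfl]
        have hfact : ((j.factorial : ℝ)) ≠ 0 := Nat.cast_ne_zero.mpr j.factorial_pos.ne'
        have hvk : v^j * v^j = u^j := by
          rw [← hv2, ← pow_add, ← pow_mul]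
          congr 1
          omega
        calc β j * β j * ((j.factorial : ℝ) * Real.sqrt (2*π))
            = Real.sqrt (2*π)*(s2^2)*((v^j*v^j)*((P j).eval x)^2/(j.factorial : ℝ)) := by
              rw [hβdef]
              field_simp
          _ = Real.sqrt (2*π) * σ2 * (u^j * ((P j).eval x)^2 / (j.factorial : ℝ)) := by
              rw [hs2, hvk]
      · intro k _ hkj
        rw [M_eq k j, if_neg (Ne.symm hkj), mul_zero]
      · intro hj'
        exact absurd hj hj'
    rw [Finset.sum_congr rfl h2, ← Finset.mul_sum]
  -- value of C
  have hexpC : 2*d₁ + (2*c₁)^2/(4*(2*b₁ - 1/2)) = u*x^2/(1+u) := by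
    rw [hd₁def, hc₁def, hb₁def, hσ2def]
    exact exp_arith u x v hu0 hu1 hv2
  have hsqrtC : Real.sqrt (π/(2*b₁ - 1/2)) = Real.sqrt (2*π) * σ2 / Real.sqrt (1-u^2) := by
    have h1u2 : (0:ℝ) < 1 - u^2 := by nlinarith
    rw [eq_div_iff (Real.sqrt_ne_zero'.mpr h1u2)]
    rw [← Real.sqrt_mul (by positivity)]
    rw [show Real.sqrt (2*π) * σ2 = Real.sqrt (2*π) * Real.sqrt (σ2^2) from by
      rw [Real.sqrt_sq hσ.le]]
    rw [← Real.sqrt_mul (by positivity)]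
    congr 1
    rw [hb₁def, hσ2def]
    exact sqrt_arith u hu0 hu1
  have hC : ∫ w, g (2*b₁ - 1/2) (2*c₁) (2*d₁) w
      = Real.sqrt (2*π) * σ2 / Real.sqrt (1-u^2) * Real.exp (u*x^2/(1+u)) := by
    rw [integral_g hb₂, hexpC, hsqrtC]
  -- conclusion
  rw [hexpand, hA, hB, hC] at hnonneg
  have hpos : (0:ℝ) < Real.sqrt (2*π) * σ2 := by positivity
  have hfin : Real.sqrt (2*π) * σ2 *
      (∑ k ∈ range (N+1), u^k * ((P k).eval x)^2 / (k.factorial : ℝ))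
      ≤ Real.sqrt (2*π) * σ2 * (Real.exp (u*x^2/(1+u)) / Real.sqrt (1-u^2)) := by
    have : Real.sqrt (2*π) * σ2 / Real.sqrt (1-u^2) * Real.exp (u*x^2/(1+u))
        = Real.sqrt (2*π) * σ2 * (Real.exp (u*x^2/(1+u)) / Real.sqrt (1-u^2)) := by
      ring
    linarith [hnonneg, this]
  exact le_of_mul_le_mul_left hfin hpos

end HermiteAux

open HermiteAux

open Classical in
/-- Truncated multivariate Hermite sum bound: for `u ∈ (0,1)` and `y ∈ ℝⁿ`,
`∑_{|a| ≤ d} (∏ He_{aᵢ}(yᵢ))² / ∏ aᵢ! ≤ u^{-d} (1-u²)^{-n/2} exp((u/(1+u)) ‖y‖²)`. -/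
theorem stmt_9 (n d : ℕ) (hn : 0 < n) (hd : 0 < d) (y : EuclideanSpace ℝ (Fin n))
    (u : ℝ) (hu0 : 0 < u) (hu1 : u < 1) :
    ∑ a ∈ (Fintype.piFinset fun _ : Fin n => Finset.range (d + 1)).filter
        (fun a => ∑ i, a i ≤ d),
      (∏ i, (Polynomial.aeval (y i) (Polynomial.hermite (a i)) : ℝ)) ^ 2 /
        ∏ i, ((a i).factorial : ℝ)
      ≤ u ^ (-(d : ℝ)) * (1 - u ^ 2) ^ (-(n : ℝ) / 2) * Real.exp (u / (1 + u) * ‖y‖ ^ 2) := by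
  have h1u2 : (0:ℝ) < 1 - u^2 := by nlinarith
  set f : Fin n → ℕ → ℝ := fun i k => u^k * ((P k).eval (y i))^2 / (k.factorial : ℝ) with hfdef
  have hf0 : ∀ i k, 0 ≤ f i k := fun i k => by rw [hfdef]; positivity
  set T : (Fin n → ℕ) → ℝ := fun a =>
      (∏ i, (P (a i)).eval (y i)) ^ 2 / ∏ i, ((a i).factorial : ℝ) with hTdef
  have hT0 : ∀ a, 0 ≤ T a := fun a => by
    rw [hTdef]
    have : (0:ℝ) ≤ ∏ i, ((a i).factorial : ℝ) :=
      Finset.prod_nonneg (fun i _ => by positivity)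
    positivity
  -- rewrite LHS using T
  have hLHS : ∑ a ∈ (Fintype.piFinset fun _ : Fin n => Finset.range (d + 1)).filter
        (fun a => ∑ i, a i ≤ d),
      (∏ i, (Polynomial.aeval (y i) (Polynomial.hermite (a i)) : ℝ)) ^ 2 /
        ∏ i, ((a i).factorial : ℝ)
      = ∑ a ∈ (Fintype.piFinset fun _ : Fin n => Finset.range (d + 1)).filter
        (fun a => ∑ i, a i ≤ d), T a := by
    refine Finset.sum_congr rfl (fun a _ => ?_)
    rw [hTdef]
    congr 2
    exact Finset.prod_congr rfl (fun i _ => aeval_hermite_eq (y i) (a i))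
  rw [hLHS]
  -- pointwise bound
  have hpoint : ∀ a ∈ (Fintype.piFinset fun _ : Fin n => Finset.range (d + 1)).filter
      (fun a => ∑ i, a i ≤ d), T a ≤ (u^d)⁻¹ * ∏ i, f i (a i) := by
    intro a ha
    rw [Finset.mem_filter] at ha
    obtain ⟨-, hsum⟩ := ha
    have hprod : ∏ i, f i (a i) = u^(∑ i, a i) * T a := by
      simp only [hfdef, hTdef]
      rw [← Finset.prod_pow_eq_pow_sum, Finset.prod_div_distrib, Finset.prod_mul_distrib,
        Finset.prod_pow, mul_div_assoc]
    have hule : u^d ≤ u^(∑ i, a i) := pow_le_pow_of_le_one hu0.le hu1.le hsum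
    have hud : (0:ℝ) < u^d := by positivity
    rw [hprod, ← mul_assoc]
    have h1le : (1:ℝ) ≤ (u^d)⁻¹ * u^(∑ i, a i) := by
      rw [← div_eq_inv_mul, le_div_iff₀ hud, one_mul]
      exact hule
    nlinarith [hT0 a, h1le]
  calc ∑ a ∈ (Fintype.piFinset fun _ : Fin n => Finset.range (d + 1)).filter
        (fun a => ∑ i, a i ≤ d), T a
      ≤ ∑ a ∈ (Fintype.piFinset fun _ : Fin n => Finset.range (d + 1)).filter
        (fun a => ∑ i, a i ≤ d), (u^d)⁻¹ * ∏ i, f i (a i) := Finset.sum_le_sum hpoint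
    _ ≤ ∑ a ∈ (Fintype.piFinset fun _ : Fin n => Finset.range (d + 1)),
          (u^d)⁻¹ * ∏ i, f i (a i) := by
        apply Finset.sum_le_sum_of_subset_of_nonneg (Finset.filter_subset _ _)
        intro a _ _
        have : (0:ℝ) ≤ ∏ i, f i (a i) := Finset.prod_nonneg (fun i _ => hf0 i (a i))
        positivity
    _ = (u^d)⁻¹ * ∏ i, ∑ k ∈ Finset.range (d+1), f i k := by
        rw [← Finset.mul_sum, Finset.prod_univ_sum]
    _ ≤ (u^d)⁻¹ * ∏ i : Fin n,
          (Real.exp (u*(y i)^2/(1+u)) / Real.sqrt (1-u^2)) := by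
        apply mul_le_mul_of_nonneg_left _ (by positivity)
        apply Finset.prod_le_prod
        · intro i _
          exact Finset.sum_nonneg (fun k _ => hf0 i k)
        · intro i _
          exact oneD u (y i) hu0 hu1 d
    _ = u ^ (-(d : ℝ)) * (1 - u ^ 2) ^ (-(n : ℝ) / 2) * Real.exp (u / (1 + u) * ‖y‖ ^ 2) := by
        rw [Finset.prod_div_distrib, Finset.prod_const, ← Real.exp_sum]
        have hnorm : ‖y‖^2 = ∑ i, (y i)^2 := by
          rw [EuclideanSpace.norm_eq]
          rw [Real.sq_sqrt (Finset.sum_nonneg (fun i _ => by positivity))]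
          exact Finset.sum_congr rfl (fun i _ => by rw [Real.norm_eq_abs, sq_abs])
        have hexp : ∑ i, u*(y i)^2/(1+u) = u / (1 + u) * ‖y‖ ^ 2 := by
          rw [hnorm, Finset.mul_sum]
          exact Finset.sum_congr rfl (fun i _ => by ring)
        rw [hexp]
        have hud : u ^ (-(d : ℝ)) = (u^d)⁻¹ := by
          rw [← Real.rpow_natCast u d, ← Real.rpow_neg hu0.le]
        have hx : (1 - u ^ 2) ^ (-(n : ℝ) / 2) = (Real.sqrt (1-u^2) ^ n)⁻¹ := by
          rw [Real.sqrt_eq_rpow, ← Real.rpow_natCast ((1-u^2) ^ ((1:ℝ)/2)) n,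
            ← Real.rpow_mul h1u2.le, ← Real.rpow_neg h1u2.le]
          congr 1
          ring
        rw [hud, hx]
        simp only [Finset.card_univ, Fintype.card_fin]
        ring
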